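/- Let W > 0, let σ, κ : ℝ → ℝ be continuous and strictly positive on [0,W], and let a > 0, b > 0, E ∈ ℝ. Suppose (φe¹, φl¹) and (φe², φl²) are both solutions of the 1D coupled porous-electrode system on [0,W] whose Neumann data agree at both endpoints (σ(0)·(φe¹)'(0) = σ(0)·(φe²)'(0), σ(W)·(φe¹)'(W) = σ(W)·(φe²)'(W), κ(0)·(φl¹)'(0) = κ(0)·(φl²)'(0), κ(W)·(φl¹)'(W) = κ(W)·(φl²)'(W)). Then the overpotential is uniquely determined: φe¹(x) − φl¹(x) = φe²(x) − φl²(x) for all x ∈ [0,W]. -/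

import Mathlib

open Set Filter Topology

noncomputable section

/-- `(φe, φl)` is a solution of the 1D coupled porous-electrode system on `[0, W]`. -/
def IsSolution1D (W : ℝ) (σ κ : ℝ → ℝ) (a b E : ℝ) (φe φl : ℝ → ℝ) : Prop :=
  ContDiffOn ℝ 1 φe (Icc 0 W) ∧ ContDiffOn ℝ 1 φl (Icc 0 W) ∧
  ContDiffOn ℝ 1 (fun x => σ x * deriv φe x) (Icc 0 W) ∧
  ContDiffOn ℝ 1 (fun x => κ x * deriv φl x) (Icc 0 W) ∧
  (∀ x ∈ Icc 0 W, deriv (fun y => σ y * deriv φe y) x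
      = a * Real.sinh (b * (φe x - φl x - E))) ∧
  (∀ x ∈ Icc 0 W, deriv (fun y => κ y * deriv φl y) x
      = -(a * Real.sinh (b * (φe x - φl x - E))))

lemma sinh_mul_nonneg' (s t : ℝ) :
    0 ≤ (Real.sinh s - Real.sinh t) * (s - t) := by
  rcases le_total t s with h | h
  · exact mul_nonneg (sub_nonneg.2 (Real.sinh_le_sinh.2 h)) (sub_nonneg.2 h)
  · have h1 : Real.sinh s ≤ Real.sinh t := Real.sinh_le_sinh.2 h
    nlinarith

lemma eq_of_sinh_mul_eq_zero' {s t : ℝ}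
    (h : (Real.sinh s - Real.sinh t) * (s - t) = 0) : s = t := by
  rcases lt_trichotomy s t with hlt | heq | hgt
  · have h1 : Real.sinh s < Real.sinh t := Real.sinh_lt_sinh.2 hlt
    nlinarith
  · exact heq
  · have h1 : Real.sinh t < Real.sinh s := Real.sinh_lt_sinh.2 hgt
    nlinarith

set_option maxHeartbeats 1000000 in
/-- The overpotential (equivalently the potential difference `φe − φl`) is uniquely determined
by the galvanostatic (all-Neumann) data. -/
theorem overpotential_unique
    (W : ℝ) (hW : 0 < W) (σ κ : ℝ → ℝ)
    (hσc : ContinuousOn σ (Icc 0 W)) (hκc : ContinuousOn κ (Icc 0 W))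
    (hσpos : ∀ x ∈ Icc 0 W, 0 < σ x) (hκpos : ∀ x ∈ Icc 0 W, 0 < κ x)
    (a b E : ℝ) (ha : 0 < a) (hb : 0 < b)
    (φe₁ φl₁ φe₂ φl₂ : ℝ → ℝ)
    (h₁ : IsSolution1D W σ κ a b E φe₁ φl₁)
    (h₂ : IsSolution1D W σ κ a b E φe₂ φl₂)
    (hbc₁ : σ 0 * deriv φe₁ 0 = σ 0 * deriv φe₂ 0)
    (hbc₂ : σ W * deriv φe₁ W = σ W * deriv φe₂ W)
    (hbc₃ : κ 0 * deriv φl₁ 0 = κ 0 * deriv φl₂ 0)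
    (hbc₄ : κ W * deriv φl₁ W = κ W * deriv φl₂ W) :
    ∀ x ∈ Icc 0 W, φe₁ x - φl₁ x = φe₂ x - φl₂ x := by
  obtain ⟨he₁, hl₁, hse₁, hke₁, hode₁, hodl₁⟩ := h₁
  obtain ⟨he₂, hl₂, hse₂, hke₂, hode₂, hodl₂⟩ := h₂
  have hsub : Ioo (0:ℝ) W ⊆ Icc 0 W := Ioo_subset_Icc_self
  have hnhds : ∀ x ∈ Ioo (0:ℝ) W, Icc (0:ℝ) W ∈ 𝓝 x := fun x hx => Icc_mem_nhds hx.1 hx.2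
  have dAt : ∀ (φ : ℝ → ℝ), ContDiffOn ℝ 1 φ (Icc 0 W) →
      ∀ x ∈ Ioo (0:ℝ) W, DifferentiableAt ℝ φ x :=
    fun φ hφ x hx => (hφ.differentiableOn one_ne_zero).differentiableAt (hnhds x hx)
  obtain ⟨f, hf⟩ : ∃ f : ℝ → ℝ, f = fun x => σ x * deriv φe₁ x - σ x * deriv φe₂ x := ⟨_, rfl⟩
  obtain ⟨g, hg⟩ : ∃ g : ℝ → ℝ, g = fun x => κ x * deriv φl₁ x - κ x * deriv φl₂ x := ⟨_, rfl⟩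
  obtain ⟨w, hw⟩ : ∃ w : ℝ → ℝ, w = fun x => φe₁ x - φl₁ x - (φe₂ x - φl₂ x) := ⟨_, rfl⟩
  have hfc : ContinuousOn f (Icc 0 W) := by
    rw [hf]; exact (hse₁.continuousOn).sub (hse₂.continuousOn)
  have hgc : ContinuousOn g (Icc 0 W) := by
    rw [hg]; exact (hke₁.continuousOn).sub (hke₂.continuousOn)
  have hwc : ContinuousOn w (Icc 0 W) := by
    rw [hw]
    exact (he₁.continuousOn.sub hl₁.continuousOn).sub (he₂.continuousOn.sub hl₂.continuousOn)
  have hf0 : f 0 = 0 := by rw [hf]; simpa using sub_eq_zero.2 hbc₁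
  have hfW : f W = 0 := by rw [hf]; simpa using sub_eq_zero.2 hbc₂
  have hg0 : g 0 = 0 := by rw [hg]; simpa using sub_eq_zero.2 hbc₃
  have hgW : g W = 0 := by rw [hg]; simpa using sub_eq_zero.2 hbc₄
  -- derivative of f on the interior
  have hfd : ∀ x ∈ Ioo (0:ℝ) W, HasDerivAt f
      (a * Real.sinh (b * (φe₁ x - φl₁ x - E)) - a * Real.sinh (b * (φe₂ x - φl₂ x - E))) x := by
    intro x hx
    have d1 : DifferentiableAt ℝ (fun y => σ y * deriv φe₁ y) x := dAt _ hse₁ x hx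
    have d2 : DifferentiableAt ℝ (fun y => σ y * deriv φe₂ y) x := dAt _ hse₂ x hx
    have H := d1.hasDerivAt.sub d2.hasDerivAt
    rw [hode₁ x (hsub hx), hode₂ x (hsub hx)] at H
    rw [hf]
    exact H
  have hgd : ∀ x ∈ Ioo (0:ℝ) W, HasDerivAt g
      (-(a * Real.sinh (b * (φe₁ x - φl₁ x - E))) -
        -(a * Real.sinh (b * (φe₂ x - φl₂ x - E)))) x := by
    intro x hx
    have d1 : DifferentiableAt ℝ (fun y => κ y * deriv φl₁ y) x := dAt _ hke₁ x hx
    have d2 : DifferentiableAt ℝ (fun y => κ y * deriv φl₂ y) x := dAt _ hke₂ x hx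
    have H := d1.hasDerivAt.sub d2.hasDerivAt
    rw [hodl₁ x (hsub hx), hodl₂ x (hsub hx)] at H
    rw [hg]
    exact H
  -- f + g is constant, hence identically 0
  have hpd : ∀ x ∈ Ioo (0:ℝ) W, HasDerivAt (fun y => f y + g y) 0 x := by
    intro x hx
    have H : HasDerivAt (fun y => f y + g y) _ x := (hfd x hx).add (hgd x hx)
    convert H using 1
    ring
  have hp0 : ∀ x ∈ Icc (0:ℝ) W, f x + g x = 0 := by
    have hmono : MonotoneOn (fun y => f y + g y) (Icc 0 W) := by
      apply monotoneOn_of_deriv_nonneg (convex_Icc 0 W) (hfc.add hgc)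
      · rw [interior_Icc]
        exact fun x hx => ((hpd x hx).differentiableAt).differentiableWithinAt
      · rw [interior_Icc]
        intro x hx
        rw [show f + g = fun y => f y + g y from rfl, (hpd x hx).deriv]
    have hanti : AntitoneOn (fun y => f y + g y) (Icc 0 W) := by
      apply antitoneOn_of_deriv_nonpos (convex_Icc 0 W) (hfc.add hgc)
      · rw [interior_Icc]
        exact fun x hx => ((hpd x hx).differentiableAt).differentiableWithinAt
      · rw [interior_Icc]
        intro x hx
        rw [show f + g = fun y => f y + g y from rfl, (hpd x hx).deriv]
    intro x hx
    have h1 := hmono (left_mem_Icc.2 hW.le) hx hx.1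
    have h2 := hanti (left_mem_Icc.2 hW.le) hx hx.1
    simp only [hf0, hg0] at h1 h2
    linarith
  -- derivative of w on the interior
  have hwd : ∀ x ∈ Ioo (0:ℝ) W, HasDerivAt w (f x / σ x + f x / κ x) x := by
    intro x hx
    have d1 := (dAt _ he₁ x hx).hasDerivAt
    have d2 := (dAt _ hl₁ x hx).hasDerivAt
    have d3 := (dAt _ he₂ x hx).hasDerivAt
    have d4 := (dAt _ hl₂ x hx).hasDerivAt
    have H : HasDerivAt (fun y => φe₁ y - φl₁ y - (φe₂ y - φl₂ y)) _ x := (d1.sub d2).sub (d3.sub d4)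
    have hσx := (hσpos x (hsub hx)).ne'
    have hκx := (hκpos x (hsub hx)).ne'
    have e1 : f x / σ x = deriv φe₁ x - deriv φe₂ x := by
      simp only [hf]
      field_simp
    have e2 : f x / κ x = deriv φl₂ x - deriv φl₁ x := by
      have hpg : g x = -f x := by
        have := hp0 x (hsub hx); linarith
      simp only [hg] at hpg
      rw [div_eq_iff hκx]
      linarith [hpg]
    rw [hw]
    convert H using 1
    rw [e1, e2]
    ring
  -- the function z = f * w is monotone and vanishes at both ends, hence ≡ 0
  have hzd : ∀ x ∈ Ioo (0:ℝ) W, HasDerivAt (fun y => f y * w y)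
      ((a * Real.sinh (b * (φe₁ x - φl₁ x - E)) - a * Real.sinh (b * (φe₂ x - φl₂ x - E))) * w x
        + f x * (f x / σ x + f x / κ x)) x :=
    fun x hx => (hfd x hx).mul (hwd x hx)
  have hterm2 : ∀ x ∈ Ioo (0:ℝ) W, 0 ≤ f x * (f x / σ x + f x / κ x) := by
    intro x hx
    have e : f x * (f x / σ x + f x / κ x) = f x ^ 2 / σ x + f x ^ 2 / κ x := by ring
    rw [e]
    exact add_nonneg (div_nonneg (sq_nonneg _) (hσpos x (hsub hx)).le)
      (div_nonneg (sq_nonneg _) (hκpos x (hsub hx)).le)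
  have hterm1 : ∀ x ∈ Ioo (0:ℝ) W,
      0 ≤ (Real.sinh (b * (φe₁ x - φl₁ x - E)) - Real.sinh (b * (φe₂ x - φl₂ x - E))) * w x := by
    intro x hx
    set s := b * (φe₁ x - φl₁ x - E)
    set t := b * (φe₂ x - φl₂ x - E)
    have hst : s - t = b * w x := by simp only [hw]; ring
    have h1 : 0 ≤ (Real.sinh s - Real.sinh t) * (b * w x) := hst ▸ sinh_mul_nonneg' s t
    nlinarith [h1, hb]
  have hzmono : MonotoneOn (fun y => f y * w y) (Icc 0 W) := by
    apply monotoneOn_of_deriv_nonneg (convex_Icc 0 W) (hfc.mul hwc)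
    · rw [interior_Icc]
      exact fun x hx => ((hzd x hx).differentiableAt).differentiableWithinAt
    · rw [interior_Icc]
      intro x hx
      rw [show f * w = fun y => f y * w y from rfl, (hzd x hx).deriv]
      have t1 := hterm1 x hx
      have t2 := hterm2 x hx
      nlinarith [mul_nonneg ha.le t1, t2]
  have hz0 : ∀ x ∈ Icc (0:ℝ) W, f x * w x = 0 := by
    intro x hx
    have h1 := hzmono (left_mem_Icc.2 hW.le) hx hx.1
    have h2 := hzmono hx (right_mem_Icc.2 hW.le) hx.2
    simp only [hf0, hfW, zero_mul] at h1 h2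
    linarith
  -- hence the derivative of z is 0 on the interior, forcing w = 0 there
  have hIoo : ∀ x ∈ Ioo (0:ℝ) W, φe₁ x - φl₁ x = φe₂ x - φl₂ x := by
    intro x hx
    have hev : (fun y => f y * w y) =ᶠ[𝓝 x] fun _ => (0:ℝ) :=
      Filter.eventuallyEq_of_mem (hnhds x hx) hz0
    have hder0 : deriv (fun y => f y * w y) x = 0 := by
      rw [hev.deriv_eq]; exact deriv_const x 0
    have hval : (a * Real.sinh (b * (φe₁ x - φl₁ x - E))
          - a * Real.sinh (b * (φe₂ x - φl₂ x - E))) * w x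
        + f x * (f x / σ x + f x / κ x) = 0 := by
      rw [← (hzd x hx).deriv]; exact hder0
    have t1 := hterm1 x hx
    have t2 := hterm2 x hx
    have hA : a * ((Real.sinh (b * (φe₁ x - φl₁ x - E))
        - Real.sinh (b * (φe₂ x - φl₂ x - E))) * w x) = 0 := by
      have h3 := mul_nonneg ha.le t1
      nlinarith [hval, t2, h3]
    have hkey : (Real.sinh (b * (φe₁ x - φl₁ x - E))
        - Real.sinh (b * (φe₂ x - φl₂ x - E))) * w x = 0 :=
      (mul_eq_zero.1 hA).resolve_left ha.ne'
    have hst : b * (φe₁ x - φl₁ x - E) - b * (φe₂ x - φl₂ x - E) = b * w x := by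
      simp only [hw]; ring
    have hzero : (Real.sinh (b * (φe₁ x - φl₁ x - E))
        - Real.sinh (b * (φe₂ x - φl₂ x - E)))
        * (b * (φe₁ x - φl₁ x - E) - b * (φe₂ x - φl₂ x - E)) = 0 := by
      rw [hst]
      linear_combination b * hkey
    have := eq_of_sinh_mul_eq_zero' hzero
    have := mul_left_cancel₀ hb.ne' this
    linarith
  -- extend to the closed interval by continuity
  intro x hx
  have hxcl : x ∈ closure (Ioo (0:ℝ) W) := by rwa [closure_Ioo hW.ne]
  have hne : (𝓝[Ioo (0:ℝ) W] x).NeBot := mem_closure_iff_nhdsWithin_neBot.1 hxcl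
  have ht1 : Tendsto w (𝓝[Ioo (0:ℝ) W] x) (𝓝 (w x)) := (hwc x hx).mono hsub
  have ht2 : Tendsto w (𝓝[Ioo (0:ℝ) W] x) (𝓝 0) := by
    apply Filter.Tendsto.congr' _ (tendsto_const_nhds (α := ℝ))
    filter_upwards [self_mem_nhdsWithin] with y hy
    have := hIoo y hy
    simp only [hw]; linarith
  have hwx : w x = 0 := tendsto_nhds_unique ht1 ht2
  simp only [hw] at hwx; linarith
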